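/- arXiv:cs/0202036 — 3 statements merged into one kernel-verified Lean document; each statement's English description precedes it below -/
import Mathlib

section
/- Let G be a simple graph with vertex set {1,…,n} and edge enumeration e_1,…,e_m, and let S(G) = S_1(G) ∪ S_2(G) ∪ S_3(G) be its ternary-XOR encoding over the variables X ∪ Y ∪ Z. If a, b, c are three distinct variables in X ∪ Y ∪ Z such that every assignment satisfying S(G) also satisfies a ⊕ b ⊕ c, then the unordered triple {a,b,c} is one of the triples whose XOR application belongs to S(G). -/
/-- A constraint application over a variable set `V`: a `k`-ary Boolean
constraint `C` applied to variables `vars 0, …, vars (k-1)`. -/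
structure CApp (V : Type) where
  k : ℕ
  C : (Fin k → Bool) → Bool
  vars : Fin k → V

/-- An assignment `I` satisfies a constraint application. -/
def CApp.sat {V : Type} (A : CApp V) (I : V → Bool) : Prop :=
  A.C (fun i => I (A.vars i)) = true

/-- The variable set `X ∪ Y ∪ Z` of the ternary-XOR encoding: `X` has one
variable `x_i` per vertex, `Y` one variable `y_k` per edge, and `Z` consists
of the variables `z_i` and `z'_i` for each vertex. -/
abbrev VXYZ (n m : ℕ) := Fin n ⊕ Fin m ⊕ (Fin n ⊕ Fin n)

/-- The vertex variable `x_i`. -/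
def vx {n m : ℕ} (i : Fin n) : VXYZ n m := Sum.inl i

/-- The edge variable `y_k`. -/
def vy {n m : ℕ} (k : Fin m) : VXYZ n m := Sum.inr (Sum.inl k)

/-- The auxiliary variable `z_i`. -/
def vz {n m : ℕ} (i : Fin n) : VXYZ n m := Sum.inr (Sum.inr (Sum.inl i))

/-- The auxiliary variable `z'_i`. -/
def vz' {n m : ℕ} (i : Fin n) : VXYZ n m := Sum.inr (Sum.inr (Sum.inr i))

/-- The ternary XOR constraint applied to the variables `a`, `b`, `c`. -/
def xorApp {V : Type} (a b c : V) : CApp V :=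
  ⟨3, fun v => Bool.xor (v 0) (Bool.xor (v 1) (v 2)), ![a, b, c]⟩

/-- Three edges form a triangle: they are the three edges spanned by three
distinct vertices. -/
def triangleEdges {n : ℕ} (e1 e2 e3 : Sym2 (Fin n)) : Prop :=
  ∃ a b c : Fin n, a ≠ b ∧ b ≠ c ∧ a ≠ c ∧
    e1 = s(a, b) ∧ e2 = s(b, c) ∧ e3 = s(a, c)

/-- The ternary-XOR encoding `S(G) = S_1(G) ∪ S_2(G) ∪ S_3(G)` of a graph
with edge enumeration `e`. -/
def SXor {n m : ℕ} (e : Fin m → Sym2 (Fin n)) : Set (CApp (VXYZ n m)) :=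
  {A | ∃ i j : Fin n, ∃ k : Fin m, e k = s(i, j) ∧ A = xorApp (vx i) (vx j) (vy k)} ∪
  {A | ∃ i : Fin n, A = xorApp (vx i) (vz i) (vz' i)} ∪
  {A | ∃ i j k : Fin m, triangleEdges (e i) (e j) (e k) ∧
    A = xorApp (vy i) (vy j) (vy k)}

lemma xorApp_sat_iff {V : Type} (a b c : V) (I : V → Bool) :
    (xorApp a b c).sat I ↔ Bool.xor (I a) (Bool.xor (I b) (I c)) = true := by
  simp [CApp.sat, xorApp]

def edgeXor {n : ℕ} (t : Fin n → Bool) : Sym2 (Fin n) → Bool :=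
  Sym2.lift ⟨fun p q => Bool.xor (t p) (t q), fun p q => by simp [Bool.xor_comm]⟩

@[simp] lemma edgeXor_mk {n : ℕ} (t : Fin n → Bool) (p q : Fin n) :
    edgeXor t s(p, q) = Bool.xor (t p) (t q) := rfl

@[simp] lemma edgeXor_false {n : ℕ} (s : Sym2 (Fin n)) :
    edgeXor (fun _ => false) s = false := by
  induction s using Sym2.ind with
  | _ x y => simp

def asg {n m : ℕ} (e : Fin m → Sym2 (Fin n)) (t u : Fin n → Bool) : VXYZ n m → Bool
  | Sum.inl i => t i
  | Sum.inr (Sum.inl k) => !(edgeXor t (e k))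
  | Sum.inr (Sum.inr (Sum.inl i)) => u i
  | Sum.inr (Sum.inr (Sum.inr i)) => !(Bool.xor (t i) (u i))

lemma asg_sat {n m : ℕ} (e : Fin m → Sym2 (Fin n)) (t u : Fin n → Bool) :
    ∀ A ∈ SXor e, A.sat (asg e t u) := by
  rintro A ((⟨i, j, k, hk, rfl⟩ | ⟨i, rfl⟩) | ⟨i, j, k, ⟨p, q, r, _, _, _, h1, h2, h3⟩, rfl⟩) <;>
    rw [xorApp_sat_iff]
  · simp only [asg, vx, vy, hk, edgeXor_mk]
    cases t i <;> cases t j <;> simp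
  · simp only [asg, vx, vz, vz']
    cases t i <;> cases u i <;> simp
  · simp only [asg, vy, h1, h2, h3, edgeXor_mk]
    cases t p <;> cases t q <;> cases t r <;> simp

lemma forall_xor_eq {n : ℕ} (c d : Fin n)
    (H : ∀ t : Fin n → Bool, Bool.xor (t c) (t d) = false) : c = d := by
  have h := H (fun x => decide (x = c))
  simp at h
  exact h.symm

lemma keyS1 {n : ℕ} (E : Sym2 (Fin n)) (hne : ¬ E.IsDiag) (i j : Fin n) (hij : i ≠ j)
    (H : ∀ t : Fin n → Bool, Bool.xor (t i) (Bool.xor (t j) (edgeXor t E)) = false) :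
    E = s(i, j) := by
  obtain ⟨p, q, rfl⟩ : ∃ p q, E = s(p, q) := Sym2.inductionOn E fun x y => ⟨x, y, rfl⟩
  rw [Sym2.mk_isDiag_iff] at hne
  have h1 := H (fun x => decide (x = i))
  have h2 := H (fun x => decide (x = j))
  simp only [edgeXor_mk] at h1 h2
  by_cases hpi : p = i <;> by_cases hqi : q = i <;> by_cases hpj : p = j <;>
    by_cases hqj : q = j <;> simp_all [Sym2.eq_swap]

lemma keyS2 {n : ℕ} (i j k : Fin n)
    (H : ∀ t u : Fin n → Bool,
      Bool.xor (t i) (Bool.xor (u j) (Bool.xor (t k) (u k))) = false) :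
    i = k ∧ j = k := by
  constructor
  · have h := H (fun x => decide (x = i)) (fun _ => false)
    simp at h
    exact h.symm
  · have h := H (fun _ => false) (fun x => decide (x = j))
    simp at h
    exact h.symm

lemma edgeXor_ind_of_not_mem {n : ℕ} (v : Fin n) (E : Sym2 (Fin n)) (h : v ∉ E) :
    edgeXor (fun x => decide (x = v)) E = false := by
  induction E using Sym2.ind with
  | _ x y =>
    rw [Sym2.mem_iff] at h
    push_neg at h
    simp [Ne.symm h.1, Ne.symm h.2]

lemma edgeXor_ind_of_mem {n : ℕ} (v : Fin n) (E : Sym2 (Fin n)) (h : v ∈ E)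
    (hd : ¬ E.IsDiag) : edgeXor (fun x => decide (x = v)) E = true := by
  induction E using Sym2.ind with
  | _ x y =>
    rw [Sym2.mk_isDiag_iff] at hd
    rcases Sym2.mem_iff.mp h with rfl | rfl
    · simp [Ne.symm hd]
    · simp [hd]

lemma keyS3 {n : ℕ} (E1 E2 E3 : Sym2 (Fin n))
    (h1 : ¬E1.IsDiag) (h2 : ¬E2.IsDiag) (h3 : ¬E3.IsDiag)
    (h12 : E1 ≠ E2) (h13 : E1 ≠ E3)
    (H : ∀ t : Fin n → Bool,
      Bool.xor (edgeXor t E1) (Bool.xor (edgeXor t E2) (edgeXor t E3)) = false) :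
    triangleEdges E1 E2 E3 := by
  obtain ⟨a1, b1, rfl⟩ : ∃ p q, E1 = s(p, q) := Sym2.inductionOn E1 fun x y => ⟨x, y, rfl⟩
  have h1' : a1 ≠ b1 := by rwa [Sym2.mk_isDiag_iff] at h1
  have hmema : a1 ∈ E2 ∨ a1 ∈ E3 := by
    by_contra hc
    push_neg at hc
    have h := H (fun x => decide (x = a1))
    rw [edgeXor_ind_of_not_mem _ _ hc.1, edgeXor_ind_of_not_mem _ _ hc.2] at h
    simp [Ne.symm h1'] at h
  have hmemb : b1 ∈ E2 ∨ b1 ∈ E3 := by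
    by_contra hc
    push_neg at hc
    have h := H (fun x => decide (x = b1))
    rw [edgeXor_ind_of_not_mem _ _ hc.1, edgeXor_ind_of_not_mem _ _ hc.2] at h
    simp [h1'] at h
  rcases hmema with ha | ha
  · -- a1 ∈ E2, so E2 = s(a1, c)
    obtain ⟨c, hE2⟩ : ∃ c, E2 = s(a1, c) := ⟨Sym2.Mem.other ha, (Sym2.other_spec ha).symm⟩
    have hca1 : c ≠ a1 := by
      rintro rfl
      exact h2 (hE2 ▸ Sym2.mk_isDiag_iff.mpr rfl)
    have hb : b1 ∈ E3 := by
      rcases hmemb with hb | hb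
      · rw [hE2, Sym2.mem_iff] at hb
        rcases hb with rfl | rfl
        · exact absurd rfl h1'
        · exact absurd (by rw [hE2, Sym2.eq_swap]) h12
      · exact hb
    obtain ⟨d, hE3⟩ : ∃ d, E3 = s(b1, d) := ⟨Sym2.Mem.other hb, (Sym2.other_spec hb).symm⟩
    have hdb1 : d ≠ b1 := by
      rintro rfl
      exact h3 (hE3 ▸ Sym2.mk_isDiag_iff.mpr rfl)
    have hcd : c = d := by
      apply forall_xor_eq
      intro t
      have h := H t
      rw [hE2, hE3] at h
      simp only [edgeXor_mk] at h
      cases hx : t a1 <;> cases hy : t b1 <;> cases hz : t c <;> cases hw : t d <;>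
        (simp only [hx, hy, hz, hw] at h ⊢; revert h; decide)
    subst hcd
    exact ⟨b1, a1, c, Ne.symm h1', Ne.symm hca1, Ne.symm hdb1, Sym2.eq_swap, hE2, hE3⟩
  · -- a1 ∈ E3, so E3 = s(a1, c)
    obtain ⟨c, hE3⟩ : ∃ c, E3 = s(a1, c) := ⟨Sym2.Mem.other ha, (Sym2.other_spec ha).symm⟩
    have hca1 : c ≠ a1 := by
      rintro rfl
      exact h3 (hE3 ▸ Sym2.mk_isDiag_iff.mpr rfl)
    have hb : b1 ∈ E2 := by
      rcases hmemb with hb | hb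
      · exact hb
      · rw [hE3, Sym2.mem_iff] at hb
        rcases hb with rfl | rfl
        · exact absurd rfl h1'
        · exact absurd (by rw [hE3, Sym2.eq_swap]) h13
    obtain ⟨d, hE2⟩ : ∃ d, E2 = s(b1, d) := ⟨Sym2.Mem.other hb, (Sym2.other_spec hb).symm⟩
    have hdb1 : d ≠ b1 := by
      rintro rfl
      exact h2 (hE2 ▸ Sym2.mk_isDiag_iff.mpr rfl)
    have hcd : c = d := by
      apply forall_xor_eq
      intro t
      have h := H t
      rw [hE2, hE3] at h
      simp only [edgeXor_mk] at h
      cases hx : t a1 <;> cases hy : t b1 <;> cases hz : t c <;> cases hw : t d <;>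
        (simp only [hx, hy, hz, hw] at h ⊢; revert h; decide)
    subst hcd
    exact ⟨a1, b1, c, h1', Ne.symm hdb1, Ne.symm hca1, rfl, hE2, hE3⟩

lemma perm132 {α : Type} (a b c : α) : ({a, c, b} : Set α) = {a, b, c} := by
  ext q; simp; tauto
lemma perm213 {α : Type} (a b c : α) : ({b, a, c} : Set α) = {a, b, c} := by
  ext q; simp; tauto
lemma perm231 {α : Type} (a b c : α) : ({b, c, a} : Set α) = {a, b, c} := by
  ext q; simp; tauto
lemma perm312 {α : Type} (a b c : α) : ({c, a, b} : Set α) = {a, b, c} := by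
  ext q; simp; tauto
lemma perm321 {α : Type} (a b c : α) : ({c, b, a} : Set α) = {a, b, c} := by
  ext q; simp; tauto

set_option maxHeartbeats 4000000 in
/-- Maximality of the ternary-XOR encoding: if `a`, `b`, `c` are distinct
variables such that every assignment satisfying `S(G)` also satisfies
`a ⊕ b ⊕ c`, then the unordered triple `{a, b, c}` is one of the triples
whose XOR application belongs to `S(G)`. -/
theorem stmt_15 {n m : ℕ} (G : SimpleGraph (Fin n)) (e : Fin m → Sym2 (Fin n))
    (hinj : Function.Injective e) (hmem : ∀ k : Fin m, e k ∈ G.edgeSet)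
    (hsurj : ∀ s ∈ G.edgeSet, ∃ k : Fin m, e k = s)
    (a b c : VXYZ n m) (hab : a ≠ b) (hbc : b ≠ c) (hac : a ≠ c)
    (hent : ∀ I : VXYZ n m → Bool,
      (∀ A ∈ SXor e, A.sat I) → (xorApp a b c).sat I) :
    ∃ p q r : VXYZ n m,
      ({p, q, r} : Set (VXYZ n m)) = {a, b, c} ∧ xorApp p q r ∈ SXor e := by
  have hH : ∀ t u : Fin n → Bool,
      Bool.xor (asg e t u a) (Bool.xor (asg e t u b) (asg e t u c)) = true := fun t u =>
    (xorApp_sat_iff a b c _).mp (hent _ (asg_sat e t u))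
  have hd : ∀ k : Fin m, ¬(e k).IsDiag := fun k =>
    SimpleGraph.not_isDiag_of_mem_edgeSet G (hmem k)
  clear hent hsurj
  rcases a with i1 | k1 | z1 | w1 <;> rcases b with i2 | k2 | z2 | w2
  · rcases c with i3 | k3 | z3 | w3
    · have hq := hH (fun _ => false) (fun _ => false)
      simp only [asg, edgeXor_false] at hq
      exact Bool.noConfusion hq
    · simp only [asg] at hH
      refine ⟨vx i1, vx i2, vy k3, rfl, Or.inl (Or.inl ⟨i1, i2, k3, ?_, rfl⟩)⟩
      refine keyS1 (e k3) (hd k3) i1 i2 (fun hq => hab (congrArg (fun q => (Sum.inl q : VXYZ n m)) hq)) (fun t => ?_)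
      have hq := hH t (fun _ => false)
      revert hq
      cases t i1 <;> cases t i2 <;> cases edgeXor t (e k3) <;> decide
    · have hq := hH (fun _ => false) (fun _ => false)
      simp only [asg, edgeXor_false] at hq
      exact Bool.noConfusion hq
    · have hq := hH (fun _ => false) (fun _ => true)
      simp only [asg, edgeXor_false] at hq
      exact Bool.noConfusion hq
  · rcases c with i3 | k3 | z3 | w3
    · simp only [asg] at hH
      refine ⟨vx i1, vx i3, vy k2, perm132 _ _ _, Or.inl (Or.inl ⟨i1, i3, k2, ?_, rfl⟩)⟩
      refine keyS1 (e k2) (hd k2) i1 i3 (fun hq => hac (congrArg (fun q => (Sum.inl q : VXYZ n m)) hq)) (fun t => ?_)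
      have hq := hH t (fun _ => false)
      revert hq
      cases t i1 <;> cases t i3 <;> cases edgeXor t (e k2) <;> decide
    · have hq := hH (fun _ => false) (fun _ => false)
      simp only [asg, edgeXor_false] at hq
      exact Bool.noConfusion hq
    · have hq := hH (fun _ => false) (fun _ => true)
      simp only [asg, edgeXor_false] at hq
      exact Bool.noConfusion hq
    · have hq := hH (fun _ => false) (fun _ => false)
      simp only [asg, edgeXor_false] at hq
      exact Bool.noConfusion hq
  · rcases c with i3 | k3 | z3 | w3
    · have hq := hH (fun _ => false) (fun _ => false)
      simp only [asg, edgeXor_false] at hq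
      exact Bool.noConfusion hq
    · have hq := hH (fun _ => false) (fun _ => true)
      simp only [asg, edgeXor_false] at hq
      exact Bool.noConfusion hq
    · have hq := hH (fun _ => false) (fun _ => false)
      simp only [asg, edgeXor_false] at hq
      exact Bool.noConfusion hq
    · simp only [asg] at hH
      obtain ⟨h1, h2⟩ := keyS2 i1 z2 w3 (fun t u => by
          have hq := hH t u
          revert hq
          cases t i1 <;> cases u z2 <;> cases t w3 <;> cases u w3 <;> decide)
      refine ⟨vx i1, vz z2, vz' w3, rfl, Or.inl (Or.inr ⟨w3, ?_⟩)⟩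
      rw [h1, h2]
  · rcases c with i3 | k3 | z3 | w3
    · have hq := hH (fun _ => false) (fun _ => true)
      simp only [asg, edgeXor_false] at hq
      exact Bool.noConfusion hq
    · have hq := hH (fun _ => false) (fun _ => false)
      simp only [asg, edgeXor_false] at hq
      exact Bool.noConfusion hq
    · simp only [asg] at hH
      obtain ⟨h1, h2⟩ := keyS2 i1 z3 w2 (fun t u => by
          have hq := hH t u
          revert hq
          cases t i1 <;> cases u z3 <;> cases t w2 <;> cases u w2 <;> decide)
      refine ⟨vx i1, vz z3, vz' w2, perm132 _ _ _, Or.inl (Or.inr ⟨w2, ?_⟩)⟩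
      rw [h1, h2]
    · have hq := hH (fun _ => false) (fun _ => false)
      simp only [asg, edgeXor_false] at hq
      exact Bool.noConfusion hq
  · rcases c with i3 | k3 | z3 | w3
    · simp only [asg] at hH
      refine ⟨vx i2, vx i3, vy k1, perm231 _ _ _, Or.inl (Or.inl ⟨i2, i3, k1, ?_, rfl⟩)⟩
      refine keyS1 (e k1) (hd k1) i2 i3 (fun hq => hbc (congrArg (fun q => (Sum.inl q : VXYZ n m)) hq)) (fun t => ?_)
      have hq := hH t (fun _ => false)
      revert hq
      cases t i2 <;> cases t i3 <;> cases edgeXor t (e k1) <;> decide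
    · have hq := hH (fun _ => false) (fun _ => false)
      simp only [asg, edgeXor_false] at hq
      exact Bool.noConfusion hq
    · have hq := hH (fun _ => false) (fun _ => true)
      simp only [asg, edgeXor_false] at hq
      exact Bool.noConfusion hq
    · have hq := hH (fun _ => false) (fun _ => false)
      simp only [asg, edgeXor_false] at hq
      exact Bool.noConfusion hq
  · rcases c with i3 | k3 | z3 | w3
    · have hq := hH (fun _ => false) (fun _ => false)
      simp only [asg, edgeXor_false] at hq
      exact Bool.noConfusion hq
    · simp only [asg] at hH
      have h12 : k1 ≠ k2 := fun hq => hab (congrArg (fun q => (Sum.inr (Sum.inl q) : VXYZ n m)) hq)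
      have h13 : k1 ≠ k3 := fun hq => hac (congrArg (fun q => (Sum.inr (Sum.inl q) : VXYZ n m)) hq)
      refine ⟨vy k1, vy k2, vy k3, rfl, Or.inr ⟨k1, k2, k3, ?_, rfl⟩⟩
      refine keyS3 (e k1) (e k2) (e k3) (hd k1) (hd k2) (hd k3) (fun hq => h12 (hinj hq)) (fun hq => h13 (hinj hq)) (fun t => ?_)
      have hq := hH t (fun _ => false)
      revert hq
      cases edgeXor t (e k1) <;> cases edgeXor t (e k2) <;> cases edgeXor t (e k3) <;> decide
    · have hq := hH (fun _ => false) (fun _ => false)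
      simp only [asg, edgeXor_false] at hq
      exact Bool.noConfusion hq
    · have hq := hH (fun _ => false) (fun _ => true)
      simp only [asg, edgeXor_false] at hq
      exact Bool.noConfusion hq
  · rcases c with i3 | k3 | z3 | w3
    · have hq := hH (fun _ => false) (fun _ => true)
      simp only [asg, edgeXor_false] at hq
      exact Bool.noConfusion hq
    · have hq := hH (fun _ => false) (fun _ => false)
      simp only [asg, edgeXor_false] at hq
      exact Bool.noConfusion hq
    · simp only [asg] at hH
      have hne : z2 ≠ z3 := fun hq => hbc (congrArg (fun q => (Sum.inr (Sum.inr (Sum.inl q)) : VXYZ n m)) hq)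
      exact absurd (hH (fun _ => false) (fun q => decide (q = z2))) (by simp [Ne.symm hne])
    · have hq := hH (fun _ => false) (fun _ => false)
      simp only [asg, edgeXor_false] at hq
      exact Bool.noConfusion hq
  · rcases c with i3 | k3 | z3 | w3
    · have hq := hH (fun _ => false) (fun _ => false)
      simp only [asg, edgeXor_false] at hq
      exact Bool.noConfusion hq
    · have hq := hH (fun _ => false) (fun _ => true)
      simp only [asg, edgeXor_false] at hq
      exact Bool.noConfusion hq
    · have hq := hH (fun _ => false) (fun _ => false)
      simp only [asg, edgeXor_false] at hq
      exact Bool.noConfusion hq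
    · simp only [asg] at hH
      have hne : w2 ≠ w3 := fun hq => hbc (congrArg (fun q => (Sum.inr (Sum.inr (Sum.inr q)) : VXYZ n m)) hq)
      exact absurd (hH (fun _ => false) (fun q => decide (q = w2))) (by simp [Ne.symm hne])
  · rcases c with i3 | k3 | z3 | w3
    · have hq := hH (fun _ => false) (fun _ => false)
      simp only [asg, edgeXor_false] at hq
      exact Bool.noConfusion hq
    · have hq := hH (fun _ => false) (fun _ => true)
      simp only [asg, edgeXor_false] at hq
      exact Bool.noConfusion hq
    · have hq := hH (fun _ => false) (fun _ => false)
      simp only [asg, edgeXor_false] at hq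
      exact Bool.noConfusion hq
    · simp only [asg] at hH
      obtain ⟨h1, h2⟩ := keyS2 i2 z1 w3 (fun t u => by
          have hq := hH t u
          revert hq
          cases t i2 <;> cases u z1 <;> cases t w3 <;> cases u w3 <;> decide)
      refine ⟨vx i2, vz z1, vz' w3, perm213 _ _ _, Or.inl (Or.inr ⟨w3, ?_⟩)⟩
      rw [h1, h2]
  · rcases c with i3 | k3 | z3 | w3
    · have hq := hH (fun _ => false) (fun _ => true)
      simp only [asg, edgeXor_false] at hq
      exact Bool.noConfusion hq
    · have hq := hH (fun _ => false) (fun _ => false)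
      simp only [asg, edgeXor_false] at hq
      exact Bool.noConfusion hq
    · simp only [asg] at hH
      have hne : z1 ≠ z3 := fun hq => hac (congrArg (fun q => (Sum.inr (Sum.inr (Sum.inl q)) : VXYZ n m)) hq)
      exact absurd (hH (fun _ => false) (fun q => decide (q = z1))) (by simp [Ne.symm hne])
    · have hq := hH (fun _ => false) (fun _ => false)
      simp only [asg, edgeXor_false] at hq
      exact Bool.noConfusion hq
  · rcases c with i3 | k3 | z3 | w3
    · have hq := hH (fun _ => false) (fun _ => false)
      simp only [asg, edgeXor_false] at hq
      exact Bool.noConfusion hq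
    · simp only [asg] at hH
      have hne : z1 ≠ z2 := fun hq => hab (congrArg (fun q => (Sum.inr (Sum.inr (Sum.inl q)) : VXYZ n m)) hq)
      exact absurd (hH (fun _ => false) (fun q => decide (q = z1))) (by simp [Ne.symm hne])
    · have hq := hH (fun _ => false) (fun _ => false)
      simp only [asg, edgeXor_false] at hq
      exact Bool.noConfusion hq
    · have hq := hH (fun _ => false) (fun _ => true)
      simp only [asg, edgeXor_false] at hq
      exact Bool.noConfusion hq
  · rcases c with i3 | k3 | z3 | w3
    · simp only [asg] at hH
      obtain ⟨h1, h2⟩ := keyS2 i3 z1 w2 (fun t u => by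
          have hq := hH t u
          revert hq
          cases t i3 <;> cases u z1 <;> cases t w2 <;> cases u w2 <;> decide)
      refine ⟨vx i3, vz z1, vz' w2, perm312 _ _ _, Or.inl (Or.inr ⟨w2, ?_⟩)⟩
      rw [h1, h2]
    · have hq := hH (fun _ => false) (fun _ => false)
      simp only [asg, edgeXor_false] at hq
      exact Bool.noConfusion hq
    · have hq := hH (fun _ => false) (fun _ => true)
      simp only [asg, edgeXor_false] at hq
      exact Bool.noConfusion hq
    · have hq := hH (fun _ => false) (fun _ => false)
      simp only [asg, edgeXor_false] at hq
      exact Bool.noConfusion hq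
  · rcases c with i3 | k3 | z3 | w3
    · have hq := hH (fun _ => false) (fun _ => true)
      simp only [asg, edgeXor_false] at hq
      exact Bool.noConfusion hq
    · have hq := hH (fun _ => false) (fun _ => false)
      simp only [asg, edgeXor_false] at hq
      exact Bool.noConfusion hq
    · simp only [asg] at hH
      obtain ⟨h1, h2⟩ := keyS2 i2 z3 w1 (fun t u => by
          have hq := hH t u
          revert hq
          cases t i2 <;> cases u z3 <;> cases t w1 <;> cases u w1 <;> decide)
      refine ⟨vx i2, vz z3, vz' w1, perm231 _ _ _, Or.inl (Or.inr ⟨w1, ?_⟩)⟩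
      rw [h1, h2]
    · have hq := hH (fun _ => false) (fun _ => false)
      simp only [asg, edgeXor_false] at hq
      exact Bool.noConfusion hq
  · rcases c with i3 | k3 | z3 | w3
    · have hq := hH (fun _ => false) (fun _ => false)
      simp only [asg, edgeXor_false] at hq
      exact Bool.noConfusion hq
    · have hq := hH (fun _ => false) (fun _ => true)
      simp only [asg, edgeXor_false] at hq
      exact Bool.noConfusion hq
    · have hq := hH (fun _ => false) (fun _ => false)
      simp only [asg, edgeXor_false] at hq
      exact Bool.noConfusion hq
    · simp only [asg] at hH
      have hne : w1 ≠ w3 := fun hq => hac (congrArg (fun q => (Sum.inr (Sum.inr (Sum.inr q)) : VXYZ n m)) hq)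
      exact absurd (hH (fun _ => false) (fun q => decide (q = w1))) (by simp [Ne.symm hne])
  · rcases c with i3 | k3 | z3 | w3
    · simp only [asg] at hH
      obtain ⟨h1, h2⟩ := keyS2 i3 z2 w1 (fun t u => by
          have hq := hH t u
          revert hq
          cases t i3 <;> cases u z2 <;> cases t w1 <;> cases u w1 <;> decide)
      refine ⟨vx i3, vz z2, vz' w1, perm321 _ _ _, Or.inl (Or.inr ⟨w1, ?_⟩)⟩
      rw [h1, h2]
    · have hq := hH (fun _ => false) (fun _ => false)
      simp only [asg, edgeXor_false] at hq
      exact Bool.noConfusion hq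
    · have hq := hH (fun _ => false) (fun _ => true)
      simp only [asg, edgeXor_false] at hq
      exact Bool.noConfusion hq
    · have hq := hH (fun _ => false) (fun _ => false)
      simp only [asg, edgeXor_false] at hq
      exact Bool.noConfusion hq
  · rcases c with i3 | k3 | z3 | w3
    · have hq := hH (fun _ => false) (fun _ => false)
      simp only [asg, edgeXor_false] at hq
      exact Bool.noConfusion hq
    · simp only [asg] at hH
      have hne : w1 ≠ w2 := fun hq => hab (congrArg (fun q => (Sum.inr (Sum.inr (Sum.inr q)) : VXYZ n m)) hq)
      exact absurd (hH (fun _ => false) (fun q => decide (q = w1))) (by simp [Ne.symm hne])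
    · have hq := hH (fun _ => false) (fun _ => false)
      simp only [asg, edgeXor_false] at hq
      exact Bool.noConfusion hq
    · have hq := hH (fun _ => false) (fun _ => true)
      simp only [asg, edgeXor_false] at hq
      exact Bool.noConfusion hq
end

section
/- Let G be a simple graph with vertex set {1,…,n} and edge enumeration e_1,…,e_m, and let S(G) be its ternary-XOR encoding over the variables X ∪ Y ∪ Z. Then every assignment α : X → {0,1} can be extended to an assignment of X ∪ Y ∪ Z that satisfies S(G). -/
/-- Every assignment `α` to the vertex variables `X` can be extended to an
assignment of `X ∪ Y ∪ Z` satisfying the ternary-XOR encoding `S(G)`. -/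
theorem stmt_16 {n m : ℕ} (G : SimpleGraph (Fin n)) (e : Fin m → Sym2 (Fin n))
    (hinj : Function.Injective e) (hmem : ∀ k : Fin m, e k ∈ G.edgeSet)
    (hsurj : ∀ s ∈ G.edgeSet, ∃ k : Fin m, e k = s)
    (α : Fin n → Bool) :
    ∃ I : VXYZ n m → Bool,
      (∀ i : Fin n, I (vx i) = α i) ∧ ∀ A ∈ SXor e, A.sat I := by
  classical
  set g : Sym2 (Fin n) → Bool :=
    Sym2.lift ⟨fun i j => Bool.xor (α i) (α j), fun i j => by simp [Bool.xor_comm]⟩ with hg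
  refine ⟨fun v => match v with
    | Sum.inl i => α i
    | Sum.inr (Sum.inl k) => ! g (e k)
    | Sum.inr (Sum.inr (Sum.inl _)) => true
    | Sum.inr (Sum.inr (Sum.inr i)) => α i, fun i => rfl, ?_⟩
  rintro A ((h | h) | h)
  · obtain ⟨i, j, k, hek, rfl⟩ := h
    simp only [CApp.sat, xorApp, vx, vy, hek, hg, Sym2.lift_mk, Matrix.cons_val_zero, Matrix.cons_val_one, Matrix.head_cons, Matrix.cons_val_two, Matrix.tail_cons]
    show Bool.xor (α i) (Bool.xor (α j) (! Bool.xor (α i) (α j))) = true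
    cases α i <;> cases α j <;> rfl
  · obtain ⟨i, rfl⟩ := h
    simp only [CApp.sat, xorApp, vx, vz, vz', Matrix.cons_val_zero, Matrix.cons_val_one, Matrix.head_cons, Matrix.cons_val_two, Matrix.tail_cons]
    show Bool.xor (α i) (Bool.xor true (α i)) = true
    cases α i <;> rfl
  · obtain ⟨i, j, k, ⟨a, b, c, -, -, -, h1, h2, h3⟩, rfl⟩ := h
    simp only [CApp.sat, xorApp, vy, h1, h2, h3, hg, Sym2.lift_mk, Matrix.cons_val_zero, Matrix.cons_val_one, Matrix.head_cons, Matrix.cons_val_two, Matrix.tail_cons]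
    show Bool.xor (! Bool.xor (α a) (α b))
        (Bool.xor (! Bool.xor (α b) (α c)) (! Bool.xor (α a) (α c))) = true
    cases α a <;> cases α b <;> cases α c <;> rfl
end

section
/- Let G and H be simple graphs on the vertex set {1,…,n}, each without isolated vertices and each with exactly m edges, with fixed edge enumerations e_1,…,e_m of G and e'_1,…,e'_m of H, and let S(G) and S(H) be their ternary-XOR encodings over the common variable set X ∪ Y ∪ Z. Then G and H are isomorphic as graphs if and only if there exists a permutation π of X ∪ Y ∪ Z such that π(S(G)) is equivalent to S(H). -/
/-- Renaming the variables of a constraint application by a permutation `π`. -/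
def CApp.rename {V : Type} (π : Equiv.Perm V) (A : CApp V) : CApp V :=
  ⟨A.k, A.C, fun i => π (A.vars i)⟩

namespace Stmt18Aux
open Sum

variable {n m : ℕ}

lemma satx {V : Type} (a b c : V) (I : V → Bool) :
    (xorApp a b c).sat I ↔ xor (I a) (xor (I b) (I c)) = true := Iff.rfl

lemma rename_sat {V : Type} (π : Equiv.Perm V) (A : CApp V) (I : V → Bool) :
    (A.rename π).sat I ↔ A.sat (fun v => I (π v)) := Iff.rfl

lemma sym2_rep (s : Sym2 (Fin n)) : ∃ i j, s = s(i, j) := by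
  induction s using Sym2.ind with
  | _ i j => exact ⟨i, j, rfl⟩

/-- All constraints satisfied. -/
def Sat (e : Fin m → Sym2 (Fin n)) (I : VXYZ n m → Bool) : Prop :=
  ∀ A ∈ SXor e, A.sat I

def xlift (x : Fin n → Bool) : Sym2 (Fin n) → Bool :=
  Sym2.lift ⟨fun i j => xor (x i) (x j), fun i j => Bool.xor_comm _ _⟩

@[simp] lemma xlift_mk (x : Fin n → Bool) (i j : Fin n) :
    xlift x s(i, j) = xor (x i) (x j) := rfl

def zf : Fin n → Bool := fun _ => false

@[simp] lemma xlift_zf (s : Sym2 (Fin n)) : xlift zf s = false := by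
  induction s using Sym2.ind with
  | _ i j => simp [xlift, zf]

/-- The generic solution of the XOR system, parameterized by free values `x`, `z`. -/
def sol (e : Fin m → Sym2 (Fin n)) (x z : Fin n → Bool) : VXYZ n m → Bool
  | .inl i => x i
  | .inr (.inl k) => ! xlift x (e k)
  | .inr (.inr (.inl i)) => z i
  | .inr (.inr (.inr i)) => ! (xor (x i) (z i))

lemma sol_sat (e : Fin m → Sym2 (Fin n)) (x z : Fin n → Bool) : Sat e (sol e x z) := by
  intro A hA
  rcases hA with (⟨i, j, k, hk, rfl⟩ | ⟨i, rfl⟩) | ⟨i, j, k, htri, rfl⟩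
  · rw [satx]
    show xor (x i) (xor (x j) (! xlift x (e k))) = true
    rw [hk, xlift_mk]
    cases x i <;> cases x j <;> rfl
  · rw [satx]
    show xor (x i) (xor (z i) (! xor (x i) (z i))) = true
    cases x i <;> cases z i <;> rfl
  · obtain ⟨a, b, c, -, -, -, h1, h2, h3⟩ := htri
    rw [satx]
    show xor (! xlift x (e i)) (xor (! xlift x (e j)) (! xlift x (e k))) = true
    rw [h1, h2, h3, xlift_mk, xlift_mk, xlift_mk]
    cases x a <;> cases x b <;> cases x c <;> rfl

lemma xor3_true_iff (a b c : Bool) : xor a (xor b c) = true ↔ c = !(xor a b) := by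
  cases a <;> cases b <;> cases c <;> decide

lemma sat_eq_sol (e : Fin m → Sym2 (Fin n)) (J : VXYZ n m → Bool) (hJ : Sat e J) :
    J = sol e (fun i => J (vx i)) (fun i => J (vz i)) := by
  funext v
  match v with
  | .inl i => rfl
  | .inr (.inr (.inl i)) => rfl
  | .inr (.inl k) =>
    obtain ⟨i, j, hk⟩ := sym2_rep (e k)
    have h := hJ (xorApp (vx i) (vx j) (vy k)) (Or.inl (Or.inl ⟨i, j, k, hk, rfl⟩))
    rw [satx, xor3_true_iff] at h
    show J (vy k) = ! xlift (fun i => J (vx i)) (e k)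
    rw [hk, xlift_mk]
    exact h
  | .inr (.inr (.inr i)) =>
    have h := hJ (xorApp (vx i) (vz i) (vz' i)) (Or.inl (Or.inr ⟨i, rfl⟩))
    rw [satx, xor3_true_iff] at h
    exact h

/-- The linear part of a solution. -/
def lin (e : Fin m → Sym2 (Fin n)) (x z : Fin n → Bool) : VXYZ n m → Bool
  | .inl i => x i
  | .inr (.inl k) => xlift x (e k)
  | .inr (.inr (.inl i)) => z i
  | .inr (.inr (.inr i)) => xor (x i) (z i)

lemma sol_eq_lin (e : Fin m → Sym2 (Fin n)) (x z : Fin n → Bool) (v : VXYZ n m) :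
    sol e x z v = xor (lin e x z v) (sol e zf zf v) := by
  match v with
  | .inl i => show x i = xor (x i) (zf i); simp [zf]
  | .inr (.inl k) =>
    obtain ⟨i, j, hk⟩ := sym2_rep (e k)
    show (! xlift x (e k)) = xor (xlift x (e k)) (! xlift zf (e k))
    rw [hk, xlift_mk, xlift_mk]
    show _ = xor (xor (x i) (x j)) (! xor (zf i) (zf j))
    cases x i <;> cases x j <;> rfl
  | .inr (.inr (.inl i)) => show z i = xor (z i) (zf i); simp [zf]
  | .inr (.inr (.inr i)) =>
    show (!(xor (x i) (z i))) = xor (xor (x i) (z i)) (!(xor (zf i) (zf i)))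
    cases x i <;> cases z i <;> rfl

/-- Dependency of a triple of variables over the solution set. -/
def dep3 (e : Fin m → Sym2 (Fin n)) (a b c : VXYZ n m) : Prop :=
  ∀ J J' : VXYZ n m → Bool, Sat e J → Sat e J' →
    xor (J a) (xor (J b) (J c)) = xor (J' a) (xor (J' b) (J' c))

lemma dep3_of_mem {e : Fin m → Sym2 (Fin n)} {a b c : VXYZ n m}
    (h : xorApp a b c ∈ SXor e) : dep3 e a b c := by
  intro J J' hJ hJ'
  have h1 := hJ _ h
  have h2 := hJ' _ h
  rw [satx] at h1 h2
  rw [h1, h2]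

lemma dep3_lin {e : Fin m → Sym2 (Fin n)} {a b c : VXYZ n m} (h : dep3 e a b c)
    (x z : Fin n → Bool) :
    xor (lin e x z a) (xor (lin e x z b) (lin e x z c)) = false := by
  have h2 := h (sol e x z) (sol e zf zf) (sol_sat e x z) (sol_sat e zf zf)
  rw [sol_eq_lin e x z a, sol_eq_lin e x z b, sol_eq_lin e x z c] at h2
  revert h2
  generalize lin e x z a = A
  generalize lin e x z b = B
  generalize lin e x z c = C
  generalize sol e zf zf a = A0
  generalize sol e zf zf b = B0
  generalize sol e zf zf c = C0
  cases A <;> cases B <;> cases C <;> cases A0 <;> cases B0 <;> cases C0 <;> decide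

def isZ : VXYZ n m → Prop := fun v => (∃ t, v = vz t) ∨ (∃ t, v = vz' t)

lemma not_isZ_vx (i : Fin n) : ¬ isZ (vx i : VXYZ n m) := by
  rintro (⟨t, h⟩ | ⟨t, h⟩) <;> simp [vx, vz, vz'] at h

lemma not_isZ_vy (k : Fin m) : ¬ isZ (vy k : VXYZ n m) := by
  rintro (⟨t, h⟩ | ⟨t, h⟩) <;> simp [vy, vz, vz'] at h

lemma cases_not_isZ {a : VXYZ n m} (ha : ¬ isZ a) :
    (∃ s, a = vx s) ∨ (∃ k, a = vy k) := by
  match a with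
  | .inl i => exact Or.inl ⟨i, rfl⟩
  | .inr (.inl k) => exact Or.inr ⟨k, rfl⟩
  | .inr (.inr (.inl i)) => exact absurd (Or.inl ⟨i, rfl⟩) ha
  | .inr (.inr (.inr i)) => exact absurd (Or.inr ⟨i, rfl⟩) ha

def dlt (j : Fin n) : Fin n → Bool := fun t => decide (t = j)

end Stmt18Aux
namespace Stmt18Aux
open Sum

variable {n m : ℕ}

@[simp] lemma lin_vx (e : Fin m → Sym2 (Fin n)) (x z : Fin n → Bool) (i : Fin n) :
    lin e x z (vx i) = x i := rfl
@[simp] lemma lin_vy (e : Fin m → Sym2 (Fin n)) (x z : Fin n → Bool) (k : Fin m) :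
    lin e x z (vy k) = xlift x (e k) := rfl
@[simp] lemma lin_vz (e : Fin m → Sym2 (Fin n)) (x z : Fin n → Bool) (i : Fin n) :
    lin e x z (vz i) = z i := rfl
@[simp] lemma lin_vz' (e : Fin m → Sym2 (Fin n)) (x z : Fin n → Bool) (i : Fin n) :
    lin e x z (vz' i) = xor (x i) (z i) := rfl
@[simp] lemma zf_app (i : Fin n) : zf i = false := rfl
@[simp] lemma dlt_app (j t : Fin n) : dlt j t = decide (t = j) := rfl

/-- Extraction of vertex-type constraints. -/
lemma L1 {e : Fin m → Sym2 (Fin n)} (hprop : ∀ k, ∃ i j, i ≠ j ∧ e k = s(i, j))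
    {a b c : VXYZ n m} (hd : dep3 e a b c) (ha : ¬ isZ a) (hb : isZ b) (hc : isZ c)
    (hbc : b ≠ c) : ∃ t, a = vx t := by
  rcases cases_not_isZ ha with ⟨s0, rfl⟩ | ⟨k0, rfl⟩
  · exact ⟨s0, rfl⟩
  exfalso
  obtain ⟨p', q', hpq, hk0⟩ := hprop k0
  have key : ∃ p : Fin n, ∀ t : Fin n,
      xor (lin e (dlt t) zf b) (lin e (dlt t) zf c) = decide (p = t) := by
    obtain (⟨p, rfl⟩ | ⟨p, rfl⟩) := hb <;> obtain (⟨q, rfl⟩ | ⟨q, rfl⟩) := hc <;>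
    · have h1 := dep3_lin hd zf (dlt p)
      simp at h1
      first
      | (subst h1; exact absurd rfl hbc)
      | (refine ⟨p, fun t => ?_⟩; subst h1; simp)
  obtain ⟨p, hp⟩ := key
  have h2 : ∀ t : Fin n, xor (xor (decide (p' = t)) (decide (q' = t))) (decide (p = t)) = false := by
    intro t
    have h := dep3_lin hd (dlt t) zf
    rw [hp t] at h
    simpa [hk0] using h
  have hpp : p = p' := by
    have := h2 p'
    simpa [Ne.symm hpq] using this
  have hpq' : p = q' := by
    have := h2 q'
    simpa [hpq] using this
  exact hpq (hpp ▸ hpq')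

/-- Extraction of edge-type constraints. -/
lemma L2 {e : Fin m → Sym2 (Fin n)} (hprop : ∀ k, ∃ i j, i ≠ j ∧ e k = s(i, j))
    {s t : Fin n} {c : VXYZ n m} (hd : dep3 e (vx s) (vx t) c) (hst : s ≠ t)
    (hc : ¬ isZ c) (hcs : c ≠ vx s) (hct : c ≠ vx t) :
    ∃ k, c = vy k ∧ e k = s(s, t) := by
  have key : ∀ r : Fin n,
      xor (decide (s = r)) (xor (decide (t = r)) (lin e (dlt r) zf c)) = false := by
    intro r
    simpa using dep3_lin hd (dlt r) zf
  rcases cases_not_isZ hc with ⟨u, rfl⟩ | ⟨k, rfl⟩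
  · exfalso
    have hus : u ≠ s := fun h => hcs (by rw [h])
    have hut : u ≠ t := fun h => hct (by rw [h])
    have := key u
    simp [Ne.symm hus, Ne.symm hut, hus, hut] at this
  obtain ⟨p, q, hpq, hk⟩ := hprop k
  have key2 : ∀ r : Fin n,
      xor (decide (s = r)) (xor (decide (t = r)) (xor (decide (p = r)) (decide (q = r)))) = false := by
    intro r
    have := key r
    simpa [hk] using this
  refine ⟨k, rfl, ?_⟩
  have hdisj : (p = s ∧ q = t) ∨ (p = t ∧ q = s) := by
    rcases eq_or_ne p s with hps | hps
    · subst hps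
      refine Or.inl ⟨rfl, ?_⟩
      rcases eq_or_ne q t with hqt | hqt
      · exact hqt
      · exfalso
        have := key2 t
        simp [hst, hqt] at this
    · rcases eq_or_ne q s with hqs | hqs
      · subst hqs
        refine Or.inr ⟨?_, rfl⟩
        rcases eq_or_ne p t with hpt | hpt
        · exact hpt
        · exfalso
          have := key2 t
          simp [hst, hpt] at this
      · exfalso
        have := key2 s
        simp [Ne.symm hst, hps, hqs] at this
  rcases hdisj with ⟨h1, h2⟩ | ⟨h1, h2⟩
  · rw [hk, h1, h2]
  · rw [hk, h1, h2, Sym2.eq_swap]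

end Stmt18Aux
namespace Stmt18Aux
open Sum

variable {n m : ℕ}

lemma pair_eq {α : Type} {a b u v : α} (hab : a ≠ b) (huv : u ≠ v)
    (hu : u = a ∨ u = b) (hv : v = a ∨ v = b) :
    (a = u ∧ b = v) ∨ (a = v ∧ b = u) := by
  rcases hu with rfl | rfl <;> rcases hv with rfl | rfl <;> tauto

lemma factA {e : Fin m → Sym2 (Fin n)}
    (hinc : ∀ i : Fin n, ∃ k j, j ≠ i ∧ e k = s(i, j))
    {J J' : VXYZ n m → Bool} (hJ : Sat e J) (hJ' : Sat e J')
    {a b : VXYZ n m} (hab : a ≠ b)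
    (hD : ∀ v, J v ≠ J' v ↔ (v = a ∨ v = b)) : isZ a ∧ isZ b := by
  obtain ⟨x, z, rfl⟩ : ∃ x z, J = sol e x z := ⟨_, _, sat_eq_sol e J hJ⟩
  obtain ⟨x', w, rfl⟩ : ∃ x' w, J' = sol e x' w := ⟨_, _, sat_eq_sol e J' hJ'⟩
  have hx : ∀ i, x i = x' i := by
    intro i
    by_contra hxi
    have h1 : (vx i : VXYZ n m) = a ∨ vx i = b := (hD (vx i)).1 hxi
    obtain ⟨zc, hzc1, hzc2⟩ : ∃ zc : VXYZ n m, (zc = vz i ∨ zc = vz' i) ∧ (zc = a ∨ zc = b) := by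
      rcases eq_or_ne (z i) (w i) with hzz | hzz
      · refine ⟨vz' i, Or.inr rfl, (hD (vz' i)).1 ?_⟩
        show (!(xor (x i) (z i))) ≠ !(xor (x' i) (w i))
        rw [← hzz]
        revert hxi
        cases x i <;> cases x' i <;> cases z i <;> decide
      · exact ⟨vz i, Or.inl rfl, (hD (vz i)).1 hzz⟩
    have hne : (vx i : VXYZ n m) ≠ zc := by
      rcases hzc1 with rfl | rfl <;> simp [vx, vz, vz']
    have hmem : ∀ v : VXYZ n m, (v = a ∨ v = b) → v = vx i ∨ v = zc := by
      rcases pair_eq hab hne h1 hzc2 with ⟨ha', hb'⟩ | ⟨ha', hb'⟩ <;>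
        rintro v (rfl | rfl) <;> tauto
    obtain ⟨k, j, hji, hk⟩ := hinc i
    have hvj : x j = x' j := by
      by_contra h
      rcases hmem (vx j) ((hD (vx j)).1 h) with h2 | h2
      · simp only [vx, Sum.inl.injEq] at h2
        exact hji h2
      · rcases hzc1 with rfl | rfl <;> simp [vx, vz, vz'] at h2
    have heq : sol e x z (vy k) = sol e x' w (vy k) := by
      by_contra h
      rcases hmem (vy k) ((hD (vy k)).1 h) with h2 | h2
      · simp [vy, vx] at h2
      · rcases hzc1 with rfl | rfl <;> simp [vy, vz, vz'] at h2
    have heq2 : (!(xor (x i) (x j))) = !(xor (x' i) (x' j)) := by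
      have e1 : sol e x z (vy k) = ! xlift x (e k) := rfl
      have e2 : sol e x' w (vy k) = ! xlift x' (e k) := rfl
      rw [e1, e2, hk, xlift_mk, xlift_mk] at heq
      exact heq
    rw [hvj] at heq2
    apply hxi
    revert heq2
    cases x i <;> cases x' i <;> cases x' j <;> decide
  have hdiff : ∀ v : VXYZ n m, sol e x z v ≠ sol e x' w v → isZ v := by
    intro v hv
    match v with
    | .inl i => exact absurd (hx i) hv
    | .inr (.inl k) =>
      exfalso
      apply hv
      obtain ⟨i, j, hk⟩ := sym2_rep (e k)
      show (! xlift x (e k)) = ! xlift x' (e k)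
      rw [hk, xlift_mk, xlift_mk, hx i, hx j]
    | .inr (.inr (.inl i)) => exact Or.inl ⟨i, rfl⟩
    | .inr (.inr (.inr i)) => exact Or.inr ⟨i, rfl⟩
  exact ⟨hdiff a ((hD a).2 (Or.inl rfl)), hdiff b ((hD b).2 (Or.inr rfl))⟩

lemma Zpres {e e' : Fin m → Sym2 (Fin n)} {π : Equiv.Perm (VXYZ n m)}
    (hinc : ∀ i : Fin n, ∃ k j, j ≠ i ∧ e k = s(i, j))
    (hπ : ∀ I : VXYZ n m → Bool, Sat e (fun v => I (π v)) ↔ Sat e' I) :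
    ∀ v : VXYZ n m, isZ v → isZ (π.symm v) := by
  have main : ∀ i : Fin n, isZ (π.symm (vz i)) ∧ isZ (π.symm (vz' i)) := by
    intro i
    have hK0 : Sat e (fun v => sol e' zf zf (π v)) := (hπ _).2 (sol_sat e' zf zf)
    have hK1 : Sat e (fun v => sol e' zf (dlt i) (π v)) := (hπ _).2 (sol_sat e' zf (dlt i))
    have hDu : ∀ u : VXYZ n m, sol e' zf zf u ≠ sol e' zf (dlt i) u ↔ (u = vz i ∨ u = vz' i) := by
      intro u
      match u with
      | .inl t =>
        show (zf t ≠ zf t) ↔ _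
        simp [vz, vz']
      | .inr (.inl k) =>
        show ((! xlift zf (e' k)) ≠ ! xlift zf (e' k)) ↔ _
        simp [vz, vz']
      | .inr (.inr (.inl t)) =>
        show (zf t ≠ dlt i t) ↔ _
        simp [zf, dlt, vz, vz']
      | .inr (.inr (.inr t)) =>
        show ((!(xor (zf t) (zf t))) ≠ !(xor (zf t) (dlt i t))) ↔ _
        simp [zf, dlt, vz, vz']
    have hab : π.symm (vz i) ≠ π.symm (vz' i) := by
      intro h
      have := π.symm.injective h
      simp [vz, vz'] at this
    apply factA hinc hK0 hK1 hab
    intro v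
    rw [hDu (π v), Equiv.apply_eq_iff_eq_symm_apply, Equiv.apply_eq_iff_eq_symm_apply]
  rintro v (⟨t, rfl⟩ | ⟨t, rfl⟩)
  · exact (main t).1
  · exact (main t).2

lemma Zrev {π : Equiv.Perm (VXYZ n m)} (hZ : ∀ v : VXYZ n m, isZ v → isZ (π.symm v)) :
    ∀ v : VXYZ n m, isZ (π.symm v) → isZ v := by
  have hsurj : Function.Surjective
      (fun u : {v : VXYZ n m // isZ v} => (⟨π.symm u.1, hZ _ u.2⟩ : {v : VXYZ n m // isZ v})) := by
    rw [← Finite.injective_iff_surjective]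
    intro u1 u2 h
    exact Subtype.ext (π.symm.injective (congrArg Subtype.val h))
  intro v hv
  obtain ⟨u, hu⟩ := hsurj ⟨π.symm v, hv⟩
  have h2 : π.symm u.1 = π.symm v := congrArg Subtype.val hu
  have h3 := π.symm.injective h2
  rw [← h3]
  exact u.2

lemma dep3_transfer {e e' : Fin m → Sym2 (Fin n)} {π : Equiv.Perm (VXYZ n m)}
    (hπ : ∀ I : VXYZ n m → Bool, Sat e (fun v => I (π v)) ↔ Sat e' I)
    {a b c : VXYZ n m} (h : dep3 e' a b c) :
    dep3 e (π.symm a) (π.symm b) (π.symm c) := by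
  intro J J' hJ hJ'
  have e1 : (fun v => (fun u => J (π.symm u)) (π v)) = J := by
    funext v; simp
  have e2 : (fun v => (fun u => J' (π.symm u)) (π v)) = J' := by
    funext v; simp
  have hJ2 : Sat e' (fun u => J (π.symm u)) := (hπ _).1 (by rw [e1]; exact hJ)
  have hJ2' : Sat e' (fun u => J' (π.symm u)) := (hπ _).1 (by rw [e2]; exact hJ')
  exact h _ _ hJ2 hJ2'

lemma rename_xorApp {V : Type} (π : Equiv.Perm V) (a b c : V) :
    (xorApp a b c).rename π = xorApp (π a) (π b) (π c) := by
  have h : (fun i => π (![a, b, c] i)) = ![π a, π b, π c] := by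
    funext i
    fin_cases i <;> rfl
  simp only [CApp.rename, xorApp]
  exact congrArg (CApp.mk 3 (fun v => Bool.xor (v 0) (Bool.xor (v 1) (v 2)))) h

end Stmt18Aux
open Stmt18Aux in
/-- Let `G` and `H` be graphs on `{1,…,n}` without isolated vertices, each
with exactly `m` edges enumerated by `e` and `e'`. Then `G` and `H` are
isomorphic iff there is a permutation `π` of `X ∪ Y ∪ Z` such that
`π(S(G))` is equivalent to `S(H)`. -/
theorem stmt_18 {n m : ℕ} (G H : SimpleGraph (Fin n))
    (hGiso : ∀ v : Fin n, ∃ w : Fin n, G.Adj v w)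
    (hHiso : ∀ v : Fin n, ∃ w : Fin n, H.Adj v w)
    (e e' : Fin m → Sym2 (Fin n))
    (heinj : Function.Injective e) (hemem : ∀ k : Fin m, e k ∈ G.edgeSet)
    (hesurj : ∀ s ∈ G.edgeSet, ∃ k : Fin m, e k = s)
    (he'inj : Function.Injective e') (he'mem : ∀ k : Fin m, e' k ∈ H.edgeSet)
    (he'surj : ∀ s ∈ H.edgeSet, ∃ k : Fin m, e' k = s) :
    Nonempty (G ≃g H) ↔
      ∃ π : Equiv.Perm (VXYZ n m), ∀ I : VXYZ n m → Bool,
        (∀ A ∈ SXor e, (A.rename π).sat I) ↔ (∀ A ∈ SXor e', A.sat I) := by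
  have hpropG : ∀ k, ∃ i j, i ≠ j ∧ e k = s(i, j) := by
    intro k
    obtain ⟨i, j, hk⟩ := sym2_rep (e k)
    exact ⟨i, j, (G.mem_edgeSet.1 (hk ▸ hemem k)).ne, hk⟩
  have hpropH : ∀ k, ∃ i j, i ≠ j ∧ e' k = s(i, j) := by
    intro k
    obtain ⟨i, j, hk⟩ := sym2_rep (e' k)
    exact ⟨i, j, (H.mem_edgeSet.1 (hk ▸ he'mem k)).ne, hk⟩
  constructor
  · rintro ⟨φ⟩
    have hκ : ∀ k : Fin m, ∃ k', e' k' = Sym2.map φ (e k) := by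
      intro k
      obtain ⟨i, j, hij, hk⟩ := hpropG k
      have hadj : G.Adj i j := G.mem_edgeSet.1 (hk ▸ hemem k)
      obtain ⟨k', hk'⟩ := he'surj s(φ i, φ j) (H.mem_edgeSet.2 (φ.map_rel_iff.2 hadj))
      exact ⟨k', by rw [hk', hk, Sym2.map_pair_eq]⟩
    choose κ hκ using hκ
    have hmapinj : Function.Injective (Sym2.map ⇑φ) := Sym2.map.injective φ.toEquiv.injective
    have κinj : Function.Injective κ := by
      intro k1 k2 h
      apply heinj
      apply hmapinj
      rw [← hκ k1, ← hκ k2, h]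
    have κbij := Finite.injective_iff_bijective.1 κinj
    refine ⟨Equiv.sumCongr φ.toEquiv (Equiv.sumCongr (Equiv.ofBijective κ κbij)
      (Equiv.sumCongr φ.toEquiv φ.toEquiv)), ?_⟩
    intro I
    constructor
    · intro hL A hA
      rcases hA with (⟨i, j, k, hk, rfl⟩ | ⟨i, rfl⟩) | ⟨i, j, k, htri, rfl⟩
      · obtain ⟨k0, rfl⟩ := κbij.2 k
        obtain ⟨i0, rfl⟩ := φ.toEquiv.surjective i
        obtain ⟨j0, rfl⟩ := φ.toEquiv.surjective j
        have hek0 : e k0 = s(i0, j0) := by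
          apply hmapinj
          rw [← hκ k0, hk, Sym2.map_pair_eq]
          rfl
        have h := hL (xorApp (vx i0) (vx j0) (vy k0)) (Or.inl (Or.inl ⟨i0, j0, k0, hek0, rfl⟩))
        rw [rename_xorApp] at h
        exact h
      · obtain ⟨i0, rfl⟩ := φ.toEquiv.surjective i
        have h := hL (xorApp (vx i0) (vz i0) (vz' i0)) (Or.inl (Or.inr ⟨i0, rfl⟩))
        rw [rename_xorApp] at h
        exact h
      · obtain ⟨i0, rfl⟩ := κbij.2 i
        obtain ⟨j0, rfl⟩ := κbij.2 j
        obtain ⟨k0, rfl⟩ := κbij.2 k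
        obtain ⟨a, b, c, hab, hbc, hac, h1, h2, h3⟩ := htri
        obtain ⟨a0, rfl⟩ := φ.toEquiv.surjective a
        obtain ⟨b0, rfl⟩ := φ.toEquiv.surjective b
        obtain ⟨c0, rfl⟩ := φ.toEquiv.surjective c
        have htri' : triangleEdges (e i0) (e j0) (e k0) := by
          refine ⟨a0, b0, c0, fun h => hab (congrArg _ h), fun h => hbc (congrArg _ h),
            fun h => hac (congrArg _ h), ?_, ?_, ?_⟩
          · apply hmapinj; rw [← hκ i0, h1, Sym2.map_pair_eq]; rfl
          · apply hmapinj; rw [← hκ j0, h2, Sym2.map_pair_eq]; rfl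
          · apply hmapinj; rw [← hκ k0, h3, Sym2.map_pair_eq]; rfl
        have h := hL (xorApp (vy i0) (vy j0) (vy k0)) (Or.inr ⟨i0, j0, k0, htri', rfl⟩)
        rw [rename_xorApp] at h
        exact h
    · intro hR A hA
      rcases hA with (⟨i, j, k, hk, rfl⟩ | ⟨i, rfl⟩) | ⟨i, j, k, htri, rfl⟩
      · rw [rename_xorApp]
        exact hR (xorApp (vx (φ i)) (vx (φ j)) (vy (κ k)))
          (Or.inl (Or.inl ⟨φ i, φ j, κ k, by rw [hκ k, hk, Sym2.map_pair_eq], rfl⟩))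
      · rw [rename_xorApp]
        exact hR (xorApp (vx (φ i)) (vz (φ i)) (vz' (φ i))) (Or.inl (Or.inr ⟨φ i, rfl⟩))
      · rw [rename_xorApp]
        obtain ⟨a, b, c, hab, hbc, hac, h1, h2, h3⟩ := htri
        refine hR (xorApp (vy (κ i)) (vy (κ j)) (vy (κ k)))
          (Or.inr ⟨κ i, κ j, κ k, ⟨φ a, φ b, φ c,
            fun h => hab (φ.toEquiv.injective h), fun h => hbc (φ.toEquiv.injective h),
            fun h => hac (φ.toEquiv.injective h), ?_, ?_, ?_⟩, rfl⟩)
        · rw [hκ i, h1, Sym2.map_pair_eq]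
        · rw [hκ j, h2, Sym2.map_pair_eq]
        · rw [hκ k, h3, Sym2.map_pair_eq]
  · rintro ⟨π, hπ0⟩
    have hπ : ∀ I : VXYZ n m → Bool, Sat e (fun v => I (π v)) ↔ Sat e' I := hπ0
    have hincG : ∀ i : Fin n, ∃ k j, j ≠ i ∧ e k = s(i, j) := by
      intro i
      obtain ⟨j, hj⟩ := hGiso i
      obtain ⟨k, hk⟩ := hesurj s(i, j) (G.mem_edgeSet.2 hj)
      exact ⟨k, j, hj.ne', hk⟩
    have hZ1 := Zpres hincG hπ
    have hZ2 := Zrev hZ1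
    have hσ : ∀ i : Fin n, ∃ t, π.symm (vx i) = vx t := by
      intro i
      have hd : dep3 e' (vx i) (vz i) (vz' i) := dep3_of_mem (Or.inl (Or.inr ⟨i, rfl⟩))
      have hd2 := dep3_transfer hπ hd
      apply L1 hpropG hd2
      · intro h
        exact not_isZ_vx i (hZ2 _ h)
      · exact hZ1 _ (Or.inl ⟨i, rfl⟩)
      · exact hZ1 _ (Or.inr ⟨i, rfl⟩)
      · intro h
        have := π.symm.injective h
        simp [vz, vz'] at this
    choose σ hσ using hσ
    have σinj : Function.Injective σ := by
      intro i1 i2 h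
      have h2 : π.symm (vx i1) = π.symm (vx i2) := by rw [hσ i1, hσ i2, h]
      have h3 := π.symm.injective h2
      simpa [vx] using h3
    have hAdj : ∀ i j : Fin n, H.Adj i j → G.Adj (σ i) (σ j) := by
      intro i j hij
      obtain ⟨k, hk⟩ := he'surj s(i, j) (H.mem_edgeSet.2 hij)
      have hd : dep3 e' (vx i) (vx j) (vy k) :=
        dep3_of_mem (Or.inl (Or.inl ⟨i, j, k, hk, rfl⟩))
      have hd2 := dep3_transfer hπ hd
      rw [hσ i, hσ j] at hd2
      have hc : ¬ isZ (π.symm (vy k)) := fun h => not_isZ_vy k (hZ2 _ h)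
      have hcs : π.symm (vy k) ≠ vx (σ i) := by
        rw [← hσ i]
        intro h
        have := π.symm.injective h
        simp [vy, vx] at this
      have hct : π.symm (vy k) ≠ vx (σ j) := by
        rw [← hσ j]
        intro h
        have := π.symm.injective h
        simp [vy, vx] at this
      obtain ⟨k', hck', hek'⟩ := L2 hpropG hd2 (fun h => hij.ne (σinj h)) hc hcs hct
      exact G.mem_edgeSet.1 (hek' ▸ hemem k')
    have σbij : Function.Bijective σ := Finite.injective_iff_bijective.1 σinj
    classical
    have himg : Finset.image (Sym2.map σ) (Finset.image e' Finset.univ) = Finset.image e Finset.univ := by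
      apply Finset.eq_of_subset_of_card_le
      · intro s hs
        simp only [Finset.mem_image] at hs ⊢
        obtain ⟨s', ⟨k, -, rfl⟩, rfl⟩ := hs
        obtain ⟨i, j, hij, hk⟩ := hpropH k
        have hadj : H.Adj i j := H.mem_edgeSet.1 (hk ▸ he'mem k)
        obtain ⟨k', hk'⟩ := hesurj s(σ i, σ j) (G.mem_edgeSet.2 (hAdj i j hadj))
        exact ⟨k', Finset.mem_univ _, by rw [hk', hk, Sym2.map_pair_eq]⟩
      · rw [Finset.card_image_of_injective _ (Sym2.map.injective σinj),
            Finset.card_image_of_injective _ heinj,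
            Finset.card_image_of_injective _ he'inj]
    have hAdj2 : ∀ i j : Fin n, G.Adj (σ i) (σ j) → H.Adj i j := by
      intro i j h
      obtain ⟨k', hk'⟩ := hesurj s(σ i, σ j) (G.mem_edgeSet.2 h)
      have hmem : s(σ i, σ j) ∈ Finset.image (Sym2.map σ) (Finset.image e' Finset.univ) := by
        rw [himg]
        exact Finset.mem_image.2 ⟨k', Finset.mem_univ _, hk'⟩
      obtain ⟨s', hs', hmap⟩ := Finset.mem_image.1 hmem
      obtain ⟨k, -, rfl⟩ := Finset.mem_image.1 hs'
      obtain ⟨a, b, hab, hk⟩ := hpropH k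
      have hadj : H.Adj a b := H.mem_edgeSet.1 (hk ▸ he'mem k)
      rw [hk, Sym2.map_pair_eq] at hmap
      rcases Sym2.eq_iff.1 hmap with ⟨h1, h2⟩ | ⟨h1, h2⟩
      · rw [← σinj h1, ← σinj h2]
        exact hadj
      · rw [← σinj h2, ← σinj h1]
        exact hadj.symm
    exact ⟨(⟨Equiv.ofBijective σ σbij, fun {a b} => ⟨hAdj2 a b, hAdj a b⟩⟩ : H ≃g G).symm⟩
end
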